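/- arXiv:1603.09076 — 4 statements merged into one kernel-verified Lean document; each statement's English description precedes it below -/
import Mathlib

section
/- Let m > 0 and r > 0. A point (p₁, p₂, z, q) with p₁ > 0, p₂ > 0, z > 0 and 0 < q < 1 satisfies (1 − q z) p₁ = 0, (r − (1 − q) z) p₂ = 0, (q p₁ + (1 − q) p₂ − 1) m z = 0 and q (1 − q)(p₁ − p₂) = 0 if and only if (p₁, p₂, z, q) = (1, 1, 1 + r, 1/(1 + r)). In other words, the rescaled system has a unique coexistence equilibrium, located at (1, 1, 1 + r, 1/(1 + r)). -/
/-- The rescaled 1 fast–3 slow predator–prey system has a unique coexistence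
equilibrium at `(p₁, p₂, z, q) = (1, 1, 1 + r, 1/(1 + r))`. -/
theorem unique_coexistence_equilibrium (m r : ℝ) (hm : 0 < m) (hr : 0 < r)
    (p₁ p₂ z q : ℝ) (hp₁ : 0 < p₁) (hp₂ : 0 < p₂) (hz : 0 < z)
    (hq0 : 0 < q) (hq1 : q < 1) :
    ((1 - q * z) * p₁ = 0 ∧
     (r - (1 - q) * z) * p₂ = 0 ∧
     (q * p₁ + (1 - q) * p₂ - 1) * m * z = 0 ∧
     q * (1 - q) * (p₁ - p₂) = 0)
    ↔ (p₁ = 1 ∧ p₂ = 1 ∧ z = 1 + r ∧ q = 1 / (1 + r)) := by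
  constructor
  · rintro ⟨h1, h2, h3, h4⟩
    have hq1' : (0:ℝ) < 1 - q := by linarith
    have hpe : p₁ = p₂ := by
      have := mul_eq_zero.mp h4
      rcases this with h | h
      · rcases mul_eq_zero.mp h with h | h <;> nlinarith
      · linarith
    have h3' : q * p₁ + (1 - q) * p₂ - 1 = 0 := by
      rcases mul_eq_zero.mp h3 with h | h
      · rcases mul_eq_zero.mp h with h | h
        · exact h
        · linarith
      · linarith
    have hp1 : p₁ = 1 := by nlinarith
    have h1' : 1 - q * z = 0 := by
      rcases mul_eq_zero.mp h1 with h | h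
      · exact h
      · linarith
    have h2' : r - (1 - q) * z = 0 := by
      rcases mul_eq_zero.mp h2 with h | h
      · exact h
      · linarith
    have hzr : z = 1 + r := by nlinarith
    refine ⟨hp1, hpe ▸ hp1, hzr, ?_⟩
    field_simp
    nlinarith
  · rintro ⟨rfl, rfl, rfl, rfl⟩
    have h : (0:ℝ) < 1 + r := by linarith
    refine ⟨?_, ?_, ?_, ?_⟩ <;> field_simp <;> ring
end

section
/- For all m > 0 and 0 < r < 1, the quartic characteristic equation λ⁴ + ((m + 2r + m r²)/(1 + r)) λ² + m r = 0 has four distinct complex roots, and every root λ is purely imaginary and nonzero (i.e., Re λ = 0 and λ ≠ 0). Consequently, the coexistence equilibrium of the rescaled system is of center–center type. -/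
open Complex

/-- For all `m > 0` and `0 < r < 1`, the characteristic equation
`λ⁴ + ((m + 2r + m r²)/(1 + r)) λ² + m r = 0` has four distinct complex roots,
all of which are purely imaginary and nonzero; hence the coexistence
equilibrium is of center–center type. -/
theorem characteristic_roots_purely_imaginary (m r : ℝ)
    (hm : 0 < m) (hr0 : 0 < r) (hr1 : r < 1) :
    (∃ S : Finset ℂ, S.card = 4 ∧
      ∀ x : ℂ, (x ^ 4 + (((m + 2 * r + m * r ^ 2) / (1 + r) : ℝ) : ℂ) * x ^ 2
          + ((m * r : ℝ) : ℂ) = 0 ↔ x ∈ S)) ∧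
    (∀ x : ℂ, x ^ 4 + (((m + 2 * r + m * r ^ 2) / (1 + r) : ℝ) : ℂ) * x ^ 2
        + ((m * r : ℝ) : ℂ) = 0 → x.re = 0 ∧ x ≠ 0) := by
  have hden : (0:ℝ) < 1 + r := by linarith
  set b : ℝ := (m + 2 * r + m * r ^ 2) / (1 + r) with hb
  have hbpos : 0 < b := by
    apply div_pos _ hden; nlinarith
  have hd : 0 < b ^ 2 - 4 * (m * r) := by
    have h1 : b ^ 2 - 4 * (m * r)
        = ((m * (1 + r^2) - 2*r)^2 + 4*m*r*(1-r)^2) / (1+r)^2 := by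
      rw [hb]; field_simp; ring
    rw [h1]
    apply div_pos _ (by positivity)
    have h2 : (0:ℝ) < 4*m*r*(1-r)^2 := by
      have h3 : (0:ℝ) < (1-r)^2 := by nlinarith
      positivity
    nlinarith [sq_nonneg (m * (1 + r^2) - 2*r)]
  set d : ℝ := b^2 - 4*(m*r) with hdd
  set s : ℝ := Real.sqrt d with hs
  have hspos : 0 < s := Real.sqrt_pos.mpr hd
  have hs2 : s^2 = d := Real.sq_sqrt hd.le
  have hsb : s < b := by nlinarith
  set μ₁ : ℝ := (b - s)/2 with hμ1
  set μ₂ : ℝ := (b + s)/2 with hμ2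
  have hμ1pos : 0 < μ₁ := by rw [hμ1]; linarith
  have hμ2pos : 0 < μ₂ := by rw [hμ2]; linarith
  have hμlt : μ₁ < μ₂ := by rw [hμ1, hμ2]; linarith
  set s₁ : ℝ := Real.sqrt μ₁ with hs1
  set s₂ : ℝ := Real.sqrt μ₂ with hs2'
  have hs1pos : 0 < s₁ := Real.sqrt_pos.mpr hμ1pos
  have hs2pos : 0 < s₂ := Real.sqrt_pos.mpr hμ2pos
  have hs1sq : s₁^2 = μ₁ := Real.sq_sqrt hμ1pos.le
  have hs2sq : s₂^2 = μ₂ := Real.sq_sqrt hμ2pos.le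
  have hslt : s₁ < s₂ := Real.sqrt_lt_sqrt hμ1pos.le hμlt
  have hsum : s₁^2 + s₂^2 = b := by rw [hs1sq, hs2sq, hμ1, hμ2]; ring
  have hprod : s₁^2 * s₂^2 = m * r := by
    rw [hs1sq, hs2sq, hμ1, hμ2]
    have h := hs2; rw [hdd] at h
    linear_combination (-1/4 : ℝ) * h
  have h1 : ((s₁:ℂ))^2 + (s₂:ℂ)^2 = ((b:ℝ):ℂ) := by exact_mod_cast congrArg (Complex.ofReal) hsum
  have h2 : ((s₁:ℂ))^2 * (s₂:ℂ)^2 = ((m*r:ℝ):ℂ) := by exact_mod_cast congrArg (Complex.ofReal) hprod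
  have key : ∀ x : ℂ, x ^ 4 + ((b:ℝ):ℂ) * x ^ 2 + ((m*r:ℝ):ℂ)
      = (x - I*s₁) * (x + I*s₁) * ((x - I*s₂) * (x + I*s₂)) := by
    intro x
    have e1 : (x - I*(s₁:ℂ)) * (x + I*s₁) = x^2 + (s₁:ℂ)^2 := by
      linear_combination (-(s₁:ℂ)^2) * Complex.I_sq
    have e2 : (x - I*(s₂:ℂ)) * (x + I*s₂) = x^2 + (s₂:ℂ)^2 := by
      linear_combination (-(s₂:ℂ)^2) * Complex.I_sq
    rw [e1, e2]
    linear_combination (-x^2) * h1 - h2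
  have hIinj : ∀ a c : ℝ, I*(a:ℂ) = I*(c:ℂ) ↔ a = c := by
    intro a c
    constructor
    · intro h; have := mul_left_cancel₀ I_ne_zero h; exact_mod_cast this
    · rintro rfl; rfl
  have hIneg : ∀ a c : ℝ, I*(a:ℂ) = -(I*(c:ℂ)) ↔ a = -c := by
    intro a c
    rw [show -(I*((c:ℝ):ℂ)) = I*(((-c : ℝ)):ℂ) by push_cast; ring]
    exact hIinj a (-c)
  have hnegI : ∀ a c : ℝ, -(I*(a:ℂ)) = I*(c:ℂ) ↔ -a = c := by
    intro a c
    rw [show -(I*((a:ℝ):ℂ)) = I*(((-a : ℝ)):ℂ) by push_cast; ring]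
    exact hIinj (-a) c
  have hroot : ∀ x : ℂ, x ^ 4 + ((b:ℝ):ℂ) * x ^ 2 + ((m*r:ℝ):ℂ) = 0 ↔
      (x = I*s₁ ∨ x = -(I*s₁) ∨ x = I*s₂ ∨ x = -(I*s₂)) := by
    intro x
    rw [key x]
    simp only [mul_eq_zero, sub_eq_zero, add_eq_zero_iff_eq_neg]
    tauto
  constructor
  · refine ⟨{I*(s₁:ℂ), -(I*(s₁:ℂ)), I*(s₂:ℂ), -(I*(s₂:ℂ))}, ?_, ?_⟩
    · rw [Finset.card_insert_of_notMem, Finset.card_insert_of_notMem,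
        Finset.card_insert_of_notMem, Finset.card_singleton]
      · simp only [Finset.mem_singleton, hIneg]; intro h; linarith
      · simp only [Finset.mem_insert, Finset.mem_singleton, neg_inj, hIinj, hIneg, hnegI]
        push_neg
        refine ⟨?_, ?_⟩ <;> intro h <;> linarith
      · simp only [Finset.mem_insert, Finset.mem_singleton, hIinj, hIneg,
          neg_inj, neg_eq_iff_eq_neg]
        push_neg
        refine ⟨?_, ?_, ?_⟩ <;> intro h <;> linarith
    · intro x
      rw [hroot x]
      simp only [Finset.mem_insert, Finset.mem_singleton]
  · intro x hx
    have hmem := (hroot x).mp hx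
    have hre : ∀ a : ℝ, (I*(a:ℂ)).re = 0 := by intro a; simp
    have hne : ∀ a : ℝ, a ≠ 0 → I*(a:ℂ) ≠ 0 := by
      intro a ha h
      rcases mul_eq_zero.mp h with h' | h'
      · exact I_ne_zero h'
      · exact ha (by exact_mod_cast h')
    rcases hmem with h | h | h | h <;> subst h
    · exact ⟨hre s₁, hne s₁ hs1pos.ne'⟩
    · exact ⟨by simp [hre s₁], neg_ne_zero.mpr (hne s₁ hs1pos.ne')⟩
    · exact ⟨hre s₂, hne s₂ hs2pos.ne'⟩
    · exact ⟨by simp [hre s₂], neg_ne_zero.mpr (hne s₂ hs2pos.ne')⟩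
end

section
/- Let m > 0 and r > 0, let I ⊆ ℝ be an open interval, and let p₁, p₂, z : I → ℝ be differentiable functions with p₁(t) > 0 and z(t) > 0 for all t ∈ I, satisfying the slow flow on M₁: dp₁/dt = (1 − z) p₁, dp₂/dt = r p₂, dz/dt = (p₁ − 1) m z on I. Then the function t ↦ m·log(p₁(t)) − m·p₁(t) + log(z(t)) − z(t) is constant on I; that is, H₁ is a conserved quantity of the slow flow on M₁. -/
/-- `H₁(p₁, z) = m log p₁ − m p₁ + log z − z` is a conserved quantity of the
slow flow on the hyperplane `M₁`. -/
theorem H1_conserved_on_M1 (m r : ℝ) (hm : 0 < m) (hr : 0 < r) (a b : ℝ)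
    (p₁ p₂ z : ℝ → ℝ)
    (hp₁pos : ∀ t ∈ Set.Ioo a b, 0 < p₁ t)
    (hzpos : ∀ t ∈ Set.Ioo a b, 0 < z t)
    (h1 : ∀ t ∈ Set.Ioo a b, HasDerivAt p₁ ((1 - z t) * p₁ t) t)
    (h2 : ∀ t ∈ Set.Ioo a b, HasDerivAt p₂ (r * p₂ t) t)
    (h3 : ∀ t ∈ Set.Ioo a b, HasDerivAt z ((p₁ t - 1) * m * z t) t) :
    ∀ s ∈ Set.Ioo a b, ∀ t ∈ Set.Ioo a b,
      m * Real.log (p₁ s) - m * p₁ s + Real.log (z s) - z s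
        = m * Real.log (p₁ t) - m * p₁ t + Real.log (z t) - z t := by
  intro s hs t ht
  set H : ℝ → ℝ := fun u => m * Real.log (p₁ u) - m * p₁ u + Real.log (z u) - z u with hH
  have key : ∀ u ∈ Set.Ioo a b, HasDerivAt H 0 u := by
    intro u hu
    have hp := hp₁pos u hu
    have hz := hzpos u hu
    have d1 : HasDerivAt (fun v => Real.log (p₁ v)) ((1 - z u) * p₁ u / p₁ u) u :=
      (h1 u hu).log hp.ne'
    have d2 : HasDerivAt (fun v => Real.log (z v)) ((p₁ u - 1) * m * z u / z u) u :=
      (h3 u hu).log hz.ne'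
    have := (((d1.const_mul m).sub ((h1 u hu).const_mul m)).add d2).sub (h3 u hu)
    refine this.congr_deriv ?_
    rw [mul_div_assoc, div_self hp.ne', mul_div_assoc, div_self hz.ne']
    ring
  have hconv : Convex ℝ (Set.Ioo a b) := convex_Ioo a b
  have hdiff : DifferentiableOn ℝ H (Set.Ioo a b) := fun u hu =>
    (key u hu).differentiableAt.differentiableWithinAt
  refine hconv.is_const_of_fderivWithin_eq_zero hdiff (fun u hu => ?_) hs ht
  have : fderivWithin ℝ H (Set.Ioo a b) u = fderiv ℝ H u :=
    fderivWithin_of_isOpen isOpen_Ioo hu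
  rw [this, (key u hu).hasFDerivAt.fderiv]
  ext v
  simp
end

section
/- Let m > 0, t* ∈ ℝ, and let p₁, p₂, z : ℝ → ℝ be functions with z(t*) > 0 and p₁(t*) < p₂(t*). Suppose z has one-sided derivatives at t* given by the two slow flows: the left-sided derivative of z at t* (within (−∞, t*]) equals (p₁(t*) − 1)·m·z(t*) and the right-sided derivative of z at t* (within [t*, ∞)) equals (p₂(t*) − 1)·m·z(t*). Then z does not have a local maximum at t*. Combined with the analogous statement at jumps from M₀ to M₁, this shows that if the predator density has a local extremum at a jump point, that extremum must be a local minimum. -/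
/-- At a jump point from `M₁` to `M₀` (where `p₁ < p₂`), the predator density
`z` cannot have a local maximum; hence any local extremum of the predator at a
jump point is a local minimum. -/
theorem no_predator_max_at_jump_M1_to_M0 (m : ℝ) (hm : 0 < m) (tstar : ℝ)
    (p₁ p₂ z : ℝ → ℝ)
    (hz : 0 < z tstar) (hp : p₁ tstar < p₂ tstar)
    (hleft : HasDerivWithinAt z ((p₁ tstar - 1) * m * z tstar) (Set.Iic tstar) tstar)
    (hright : HasDerivWithinAt z ((p₂ tstar - 1) * m * z tstar) (Set.Ici tstar) tstar) :
    ¬ IsLocalMax z tstar := by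
  intro hmax
  have hmaxR : IsLocalMaxOn z (Set.Ici tstar) tstar := hmax.on _
  have hmaxL : IsLocalMaxOn z (Set.Iic tstar) tstar := hmax.on _
  have h1 : (1 : ℝ) ∈ posTangentConeAt (Set.Ici tstar) tstar := by
    exact mem_posTangentConeAt_of_segment_subset
      ((convex_Ici tstar).segment_subset Set.self_mem_Ici (by simp))
  have h2 : (-1 : ℝ) ∈ posTangentConeAt (Set.Iic tstar) tstar := by
    exact mem_posTangentConeAt_of_segment_subset
      ((convex_Iic tstar).segment_subset Set.self_mem_Iic (by simp))
  have hR := hmaxR.hasFDerivWithinAt_nonpos hright.hasFDerivWithinAt h1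
  have hL := hmaxL.hasFDerivWithinAt_nonpos hleft.hasFDerivWithinAt h2
  simp only [ContinuousLinearMap.toSpanSingleton_apply, ContinuousLinearMap.smulRight_apply, ContinuousLinearMap.one_apply,
    one_smul, smul_eq_mul, mul_one, mul_neg] at hR hL
  nlinarith [mul_pos hm hz]
end
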